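/- Let ℍ denote the real quaternions, let m ≤ n be natural numbers, and equip ℍ^k with the ℓ² norm of PiLp 2 (fun _ : Fin k => ℍ). Let ι : ℍ^m →ₗᵢ[ℍ] ℍ^n be the standard inclusion, given by (ι x) i = x ⟨i, h⟩ if h : (i : ℕ) < m and (ι x) i = 0 otherwise. Consider the action of the group G(n) of ℍ-linear isometric equivalences of ℍ^n on ℍ-linear isometries by postcomposition. Then the stabilizer subgroup { e ∈ G(n) | e ∘ ι = ι } is isomorphic, as a group, to the group G(n−m) of ℍ-linear isometric equivalences of ℍ^{n−m}. -/

import Mathlib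

open Quaternion

/-- The stabilizer, inside the group of linear isometric equivalences of
`PiLp 2 (fun _ : Fin n => ℍ[ℝ])`, of a linear isometric embedding
`ι : PiLp 2 (fun _ : Fin m => ℍ[ℝ]) →ₗᵢ[ℍ[ℝ]] PiLp 2 (fun _ : Fin n => ℍ[ℝ])` under the
postcomposition action. -/
noncomputable def stabilizerOfInclusion {m n : ℕ}
    (ι : PiLp 2 (fun _ : Fin m => ℍ[ℝ]) →ₗᵢ[ℍ[ℝ]] PiLp 2 (fun _ : Fin n => ℍ[ℝ])) :
    Subgroup (PiLp 2 (fun _ : Fin n => ℍ[ℝ]) ≃ₗᵢ[ℍ[ℝ]] PiLp 2 (fun _ : Fin n => ℍ[ℝ])) where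
  carrier := { e | ⇑e ∘ ⇑ι = ⇑ι }
  one_mem' := by
    funext x
    simp
  mul_mem' := by
    intro a b ha hb
    funext x
    have hbx := congrFun hb x
    have hax := congrFun ha x
    simp only [Function.comp_apply] at hbx hax ⊢
    simp only [LinearIsometryEquiv.coe_mul, Function.comp_apply]
    rw [hbx]
    simpa using hax
  inv_mem' := by
    intro a ha
    funext x
    have hax := congrFun ha x
    simp only [Function.comp_apply] at hax ⊢
    simp only [LinearIsometryEquiv.coe_inv]
    have h2 : a.symm (a (ι x)) = ι x := a.symm_apply_apply _
    rw [hax] at h2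
    exact h2



noncomputable section Aux

variable {m n : ℕ}

local notation "Vq" k => PiLp 2 (fun _ : Fin k => ℍ[ℝ])

/-- embedding of high indices -/
def embHigh (hmn : m ≤ n) (k : Fin (n - m)) : Fin n := ⟨m + k, by omega⟩

lemma sum_split (hmn : m ≤ n) (g : Fin n → ℝ) :
    ∑ i, g i = (∑ j : Fin m, g (Fin.castLE hmn j)) +
      ∑ k : Fin (n - m), g (embHigh hmn k) := by
  have h : m + (n - m) = n := by omega
  rw [← Equiv.sum_comp (finSumFinEquiv.trans (finCongr h)) g, Fintype.sum_sum_type]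
  congr 1

lemma normsq_split (hmn : m ≤ n) (x : Vq n) :
    ‖x‖ ^ 2 = (∑ j : Fin m, ‖x (Fin.castLE hmn j)‖ ^ 2) +
      ∑ k : Fin (n - m), ‖x (embHigh hmn k)‖ ^ 2 := by
  rw [PiLp.norm_sq_eq_of_L2, sum_split hmn]


/-- Embedding of `ℍ^{n-m}` into the high coordinates of `ℍ^n`. -/
def Jfun (hmn : m ≤ n) (y : Vq (n - m)) : Vq n :=
  WithLp.toLp 2 fun i => if h : (i : ℕ) < m then 0 else y ⟨(i : ℕ) - m, by have := i.isLt; omega⟩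

/-- Projection onto the low coordinates. -/
def loPart (hmn : m ≤ n) (x : Vq n) : Vq m := WithLp.toLp 2 fun j => x (Fin.castLE hmn j)

/-- Projection onto the high coordinates. -/
def hiPart (hmn : m ≤ n) (x : Vq n) : Vq (n - m) := WithLp.toLp 2 fun k => x (embHigh hmn k)

lemma Jfun_low (hmn : m ≤ n) (y : Vq (n - m)) {i : Fin n} (h : (i : ℕ) < m) :
    Jfun hmn y i = 0 := dif_pos h

lemma Jfun_high (hmn : m ≤ n) (y : Vq (n - m)) {i : Fin n} (h : ¬ (i : ℕ) < m) :
    Jfun hmn y i = y ⟨(i : ℕ) - m, by have := i.isLt; omega⟩ := dif_neg h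

lemma Jfun_emb (hmn : m ≤ n) (y : Vq (n - m)) (k : Fin (n - m)) :
    Jfun hmn y (embHigh hmn k) = y k := by
  rw [Jfun_high hmn y (by simp [embHigh])]
  apply congrArg y
  exact Fin.ext (by simp [embHigh])

lemma hiPart_Jfun (hmn : m ≤ n) (y : Vq (n - m)) : hiPart hmn (Jfun hmn y) = y := by
  ext1 k
  exact Jfun_emb hmn y k

lemma Jfun_add (hmn : m ≤ n) (y z : Vq (n - m)) :
    Jfun hmn (y + z) = Jfun hmn y + Jfun hmn z := by
  ext1 i
  rw [PiLp.add_apply]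
  by_cases h : (i : ℕ) < m
  · rw [Jfun_low hmn _ h, Jfun_low hmn _ h, Jfun_low hmn _ h, add_zero]
  · rw [Jfun_high hmn _ h, Jfun_high hmn _ h, Jfun_high hmn _ h, PiLp.add_apply]

lemma Jfun_smul (hmn : m ≤ n) (c : ℍ[ℝ]) (y : Vq (n - m)) :
    Jfun hmn (c • y) = c • Jfun hmn y := by
  ext1 i
  rw [PiLp.smul_apply]
  by_cases h : (i : ℕ) < m
  · rw [Jfun_low hmn _ h, Jfun_low hmn _ h, smul_zero]
  · rw [Jfun_high hmn _ h, Jfun_high hmn _ h, PiLp.smul_apply]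

lemma hiPart_add (hmn : m ≤ n) (x y : Vq n) :
    hiPart hmn (x + y) = hiPart hmn x + hiPart hmn y := by
  ext1 k
  rw [PiLp.add_apply]
  rfl

lemma hiPart_smul (hmn : m ≤ n) (c : ℍ[ℝ]) (x : Vq n) :
    hiPart hmn (c • x) = c • hiPart hmn x := by
  ext1 k
  rw [PiLp.smul_apply]
  rfl

lemma norm_Jfun (hmn : m ≤ n) (y : Vq (n - m)) : ‖Jfun hmn y‖ = ‖y‖ := by
  have h2 : ‖Jfun hmn y‖ ^ 2 = ‖y‖ ^ 2 := by
    rw [normsq_split hmn (Jfun hmn y), PiLp.norm_sq_eq_of_L2]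
    have hlow : ∀ j : Fin m, ‖Jfun hmn y (Fin.castLE hmn j)‖ ^ 2 = 0 := by
      intro j
      rw [Jfun_low hmn y (by simpa using j.isLt)]
      simp
    rw [Finset.sum_congr rfl (fun j _ => hlow j)]
    simp [Jfun_emb]
  exact (sq_eq_sq₀ (norm_nonneg _) (norm_nonneg _)).mp h2


section WithIota

variable (ι : (Vq m) →ₗᵢ[ℍ[ℝ]] (Vq n))

lemma iota_low (hι : ∀ (x : Vq m) (i : Fin n),
      ι x i = if h : (i : ℕ) < m then x ⟨(i : ℕ), h⟩ else 0)
    (hmn : m ≤ n) (x : Vq m) (j : Fin m) :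
    ι x (Fin.castLE hmn j) = x j := by
  rw [hι, dif_pos (by simpa using j.isLt)]
  exact congrArg x (Fin.ext rfl)

lemma iota_high (hι : ∀ (x : Vq m) (i : Fin n),
      ι x i = if h : (i : ℕ) < m then x ⟨(i : ℕ), h⟩ else 0)
    (hmn : m ≤ n) (x : Vq m) (k : Fin (n - m)) :
    ι x (embHigh hmn k) = 0 := by
  rw [hι, dif_neg (by simp [embHigh])]

lemma decomp (hι : ∀ (x : Vq m) (i : Fin n),
      ι x i = if h : (i : ℕ) < m then x ⟨(i : ℕ), h⟩ else 0)
    (hmn : m ≤ n) (x : Vq n) :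
    x = ι (loPart hmn x) + Jfun hmn (hiPart hmn x) := by
  ext1 i
  rw [PiLp.add_apply, hι]
  by_cases h : (i : ℕ) < m
  · rw [dif_pos h, Jfun_low hmn _ h, add_zero]
    show x (Fin.castLE hmn ⟨(i : ℕ), h⟩) = x i
    exact congrArg x (Fin.ext rfl)
  · rw [dif_neg h, Jfun_high hmn _ h, zero_add]
    show x i = x (embHigh hmn _)
    apply congrArg x
    exact Fin.ext (by simp only [embHigh]; omega)

lemma stab_low_zero (hι : ∀ (x : Vq m) (i : Fin n),
      ι x i = if h : (i : ℕ) < m then x ⟨(i : ℕ), h⟩ else 0)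
    (hmn : m ≤ n)
    (e : (Vq n) ≃ₗᵢ[ℍ[ℝ]] (Vq n)) (he : ⇑e ∘ ⇑ι = ⇑ι)
    (y : Vq (n - m)) {i : Fin n} (him : (i : ℕ) < m) :
    e (Jfun hmn y) i = 0 := by
  set u : Vq n := e (Jfun hmn y) with hu
  set x₀ : Vq m := loPart hmn u with hx₀
  set w : Vq n := ι x₀ with hw
  have hew : e w = w := congrFun he x₀
  have hw_low : ∀ j : Fin m, w (Fin.castLE hmn j) = u (Fin.castLE hmn j) := by
    intro j
    rw [hw, iota_low ι hι hmn]
    rfl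
  have hw_high : ∀ k, w (embHigh hmn k) = 0 := fun k => iota_high ι hι hmn x₀ k
  have h1 : ‖u - w‖ ^ 2 = ‖u‖ ^ 2 - ‖w‖ ^ 2 := by
    rw [normsq_split hmn (u - w), normsq_split hmn u, normsq_split hmn w]
    have A : ∑ j : Fin m, ‖(u - w) (Fin.castLE hmn j)‖ ^ 2 = 0 := by
      refine Finset.sum_eq_zero fun j _ => ?_
      rw [PiLp.sub_apply, hw_low j, sub_self, norm_zero]
      exact zero_pow two_ne_zero
    have B : ∑ k : Fin (n - m), ‖(u - w) (embHigh hmn k)‖ ^ 2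
        = ∑ k : Fin (n - m), ‖u (embHigh hmn k)‖ ^ 2 := by
      refine Finset.sum_congr rfl fun k _ => ?_
      rw [PiLp.sub_apply, hw_high k, sub_zero]
    have C : ∑ j : Fin m, ‖w (Fin.castLE hmn j)‖ ^ 2
        = ∑ j : Fin m, ‖u (Fin.castLE hmn j)‖ ^ 2 := by
      refine Finset.sum_congr rfl fun j _ => ?_
      rw [hw_low j]
    have D : ∑ k : Fin (n - m), ‖w (embHigh hmn k)‖ ^ 2 = 0 := by
      refine Finset.sum_eq_zero fun k _ => ?_
      rw [hw_high k, norm_zero]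
      exact zero_pow two_ne_zero
    rw [A, B, C, D]
    ring
  have h2 : ‖u - w‖ = ‖Jfun hmn y - ι x₀‖ := by
    have h' : u - w = e (Jfun hmn y - ι x₀) := by rw [map_sub, hew]
    rw [h', e.norm_map]
  have h3 : ‖Jfun hmn y - ι x₀‖ ^ 2 = ‖Jfun hmn y‖ ^ 2 + ‖ι x₀‖ ^ 2 := by
    rw [normsq_split hmn (Jfun hmn y - ι x₀), normsq_split hmn (Jfun hmn y),
      normsq_split hmn (ι x₀)]
    have A : ∑ j : Fin m, ‖(Jfun hmn y - ι x₀) (Fin.castLE hmn j)‖ ^ 2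
        = ∑ j : Fin m, ‖ι x₀ (Fin.castLE hmn j)‖ ^ 2 := by
      refine Finset.sum_congr rfl fun j _ => ?_
      rw [PiLp.sub_apply, Jfun_low hmn y (by simpa using j.isLt), zero_sub, norm_neg]
    have B : ∑ k : Fin (n - m), ‖(Jfun hmn y - ι x₀) (embHigh hmn k)‖ ^ 2
        = ∑ k : Fin (n - m), ‖Jfun hmn y (embHigh hmn k)‖ ^ 2 := by
      refine Finset.sum_congr rfl fun k _ => ?_
      rw [PiLp.sub_apply, iota_high ι hι hmn x₀ k, sub_zero]
    have C : ∑ j : Fin m, ‖Jfun hmn y (Fin.castLE hmn j)‖ ^ 2 = 0 := by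
      refine Finset.sum_eq_zero fun j _ => ?_
      rw [Jfun_low hmn y (by simpa using j.isLt), norm_zero]
      exact zero_pow two_ne_zero
    have D : ∑ k : Fin (n - m), ‖ι x₀ (embHigh hmn k)‖ ^ 2 = 0 := by
      refine Finset.sum_eq_zero fun k _ => ?_
      rw [iota_high ι hι hmn x₀ k, norm_zero]
      exact zero_pow two_ne_zero
    rw [A, B, C, D]
    ring
  have h4 : ‖u‖ = ‖Jfun hmn y‖ := by rw [hu, e.norm_map]
  have h5 : ‖ι x₀‖ = ‖w‖ := rfl
  have h2sq : ‖u - w‖ ^ 2 = ‖Jfun hmn y - ι x₀‖ ^ 2 := by rw [h2]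
  have hwsq : ‖w‖ ^ 2 = 0 := by
    have : ‖u‖ ^ 2 - ‖w‖ ^ 2 = ‖u‖ ^ 2 + ‖w‖ ^ 2 := by
      rw [← h1, h2sq, h3, ← h4, h5]
    linarith
  have hw0 : w = 0 := norm_eq_zero.mp (by
    have := sq_eq_zero_iff.mp hwsq
    exact this)
  have hwi : w i = u i := by
    rw [hw, hι, dif_pos him]
    show u (Fin.castLE hmn ⟨(i : ℕ), him⟩) = u i
    exact congrArg u (Fin.ext rfl)
  rw [← hwi, hw0]
  rfl


/-- `e` maps the high subspace to itself. -/
lemma eJ (hι : ∀ (x : Vq m) (i : Fin n),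
      ι x i = if h : (i : ℕ) < m then x ⟨(i : ℕ), h⟩ else 0)
    (hmn : m ≤ n)
    (e : (Vq n) ≃ₗᵢ[ℍ[ℝ]] (Vq n)) (he : ⇑e ∘ ⇑ι = ⇑ι) (y : Vq (n - m)) :
    e (Jfun hmn y) = Jfun hmn (hiPart hmn (e (Jfun hmn y))) := by
  ext1 i
  by_cases h : (i : ℕ) < m
  · rw [Jfun_low hmn _ h]
    exact stab_low_zero ι hι hmn e he y h
  · rw [Jfun_high hmn _ h]
    show e (Jfun hmn y) i
        = e (Jfun hmn y) (embHigh hmn ⟨(i : ℕ) - m, by have := i.isLt; omega⟩)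
    exact congrArg (e (Jfun hmn y))
      (Fin.ext (show (i : ℕ) = m + ((i : ℕ) - m) by omega))

/-- restriction of a stabilizer element to the high subspace, as a function. -/
def resFun (hmn : m ≤ n) (e : (Vq n) ≃ₗᵢ[ℍ[ℝ]] (Vq n)) (y : Vq (n - m)) :
    Vq (n - m) := hiPart hmn (e (Jfun hmn y))

lemma norm_resFun (hι : ∀ (x : Vq m) (i : Fin n),
      ι x i = if h : (i : ℕ) < m then x ⟨(i : ℕ), h⟩ else 0)
    (hmn : m ≤ n)
    (e : (Vq n) ≃ₗᵢ[ℍ[ℝ]] (Vq n)) (he : ⇑e ∘ ⇑ι = ⇑ι) (y : Vq (n - m)) :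
    ‖resFun hmn e y‖ = ‖y‖ := by
  have hsq : ‖resFun hmn e y‖ ^ 2 = ‖y‖ ^ 2 := by
    have h1 : ‖e (Jfun hmn y)‖ ^ 2 = ‖y‖ ^ 2 := by
      rw [e.norm_map, norm_Jfun]
    rw [← h1, normsq_split hmn (e (Jfun hmn y)), PiLp.norm_sq_eq_of_L2]
    have A : ∑ j : Fin m, ‖e (Jfun hmn y) (Fin.castLE hmn j)‖ ^ 2 = 0 := by
      refine Finset.sum_eq_zero fun j _ => ?_
      rw [stab_low_zero ι hι hmn e he y (by simpa using j.isLt), norm_zero]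
      exact zero_pow two_ne_zero
    rw [A, zero_add]
    rfl
  exact (sq_eq_sq₀ (norm_nonneg _) (norm_nonneg _)).mp hsq

lemma symm_mem (e : (Vq n) ≃ₗᵢ[ℍ[ℝ]] (Vq n)) (he : ⇑e ∘ ⇑ι = ⇑ι) :
    ⇑e.symm ∘ ⇑ι = ⇑ι := by
  funext x
  have := congrFun he x
  simp only [Function.comp_apply] at this ⊢
  have h2 := congrArg e.symm this
  rw [e.symm_apply_apply] at h2
  exact h2.symm

/-- restriction of a stabilizer element to the high subspace, as a linear
isometric equivalence. -/
noncomputable def resEquiv (hι : ∀ (x : Vq m) (i : Fin n),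
      ι x i = if h : (i : ℕ) < m then x ⟨(i : ℕ), h⟩ else 0)
    (hmn : m ≤ n)
    (e : (Vq n) ≃ₗᵢ[ℍ[ℝ]] (Vq n)) (he : ⇑e ∘ ⇑ι = ⇑ι) :
    (Vq (n - m)) ≃ₗᵢ[ℍ[ℝ]] (Vq (n - m)) where
  toFun := resFun hmn e
  invFun := resFun hmn e.symm
  map_add' y z := by
    unfold resFun
    rw [Jfun_add, map_add, hiPart_add]
  map_smul' c y := by
    show hiPart hmn (e (Jfun hmn (c • y))) = c • hiPart hmn (e (Jfun hmn y))
    rw [Jfun_smul, map_smul, hiPart_smul]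
  left_inv y := by
    show hiPart hmn (e.symm (Jfun hmn (hiPart hmn (e (Jfun hmn y))))) = y
    rw [← eJ ι hι hmn e he y, e.symm_apply_apply, hiPart_Jfun]
  right_inv y := by
    show hiPart hmn (e (Jfun hmn (hiPart hmn (e.symm (Jfun hmn y))))) = y
    rw [← eJ ι hι hmn e.symm (symm_mem ι e he) y, e.apply_symm_apply, hiPart_Jfun]
  norm_map' y := norm_resFun ι hι hmn e he y

lemma resEquiv_mul (hι : ∀ (x : Vq m) (i : Fin n),
      ι x i = if h : (i : ℕ) < m then x ⟨(i : ℕ), h⟩ else 0)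
    (hmn : m ≤ n)
    (a b : (Vq n) ≃ₗᵢ[ℍ[ℝ]] (Vq n)) (ha : ⇑a ∘ ⇑ι = ⇑ι) (hb : ⇑b ∘ ⇑ι = ⇑ι)
    (hab : ⇑(a * b) ∘ ⇑ι = ⇑ι) (y : Vq (n - m)) :
    resEquiv ι hι hmn (a * b) hab y =
      resEquiv ι hι hmn a ha (resEquiv ι hι hmn b hb y) := by
  show hiPart hmn ((a * b) (Jfun hmn y))
      = hiPart hmn (a (Jfun hmn (hiPart hmn (b (Jfun hmn y)))))
  rw [← eJ ι hι hmn b hb y]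
  rfl

end WithIota

section Blk

/-- Block-diagonal extension of an isometry of the high subspace. -/
noncomputable def blkFun (hmn : m ≤ n) (f : (Vq (n - m)) ≃ₗᵢ[ℍ[ℝ]] (Vq (n - m)))
    (x : Vq n) : Vq n :=
  WithLp.toLp 2 fun i => if h : (i : ℕ) < m then x i
    else f (hiPart hmn x) ⟨(i : ℕ) - m, by have := i.isLt; omega⟩

lemma blk_low (hmn : m ≤ n) (f : (Vq (n - m)) ≃ₗᵢ[ℍ[ℝ]] (Vq (n - m)))
    (x : Vq n) {i : Fin n} (h : (i : ℕ) < m) : blkFun hmn f x i = x i := dif_pos h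

lemma blk_high (hmn : m ≤ n) (f : (Vq (n - m)) ≃ₗᵢ[ℍ[ℝ]] (Vq (n - m)))
    (x : Vq n) {i : Fin n} (h : ¬ (i : ℕ) < m) :
    blkFun hmn f x i = f (hiPart hmn x) ⟨(i : ℕ) - m, by have := i.isLt; omega⟩ :=
  dif_neg h

lemma hiPart_blk (hmn : m ≤ n) (f : (Vq (n - m)) ≃ₗᵢ[ℍ[ℝ]] (Vq (n - m)))
    (x : Vq n) : hiPart hmn (blkFun hmn f x) = f (hiPart hmn x) := by
  ext1 k
  show blkFun hmn f x (embHigh hmn k) = f (hiPart hmn x) k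
  rw [blk_high hmn f x (by simp [embHigh])]
  exact congrArg (f (hiPart hmn x)) (Fin.ext (show m + (k : ℕ) - m = (k : ℕ) by omega))

lemma norm_blkFun (hmn : m ≤ n) (f : (Vq (n - m)) ≃ₗᵢ[ℍ[ℝ]] (Vq (n - m)))
    (x : Vq n) : ‖blkFun hmn f x‖ = ‖x‖ := by
  have hsq : ‖blkFun hmn f x‖ ^ 2 = ‖x‖ ^ 2 := by
    rw [normsq_split hmn (blkFun hmn f x), normsq_split hmn x]
    have A : ∑ j : Fin m, ‖blkFun hmn f x (Fin.castLE hmn j)‖ ^ 2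
        = ∑ j : Fin m, ‖x (Fin.castLE hmn j)‖ ^ 2 := by
      refine Finset.sum_congr rfl fun j _ => ?_
      rw [blk_low hmn f x (by simpa using j.isLt)]
    have B : ∑ k : Fin (n - m), ‖blkFun hmn f x (embHigh hmn k)‖ ^ 2
        = ∑ k : Fin (n - m), ‖x (embHigh hmn k)‖ ^ 2 := by
      have hB1 : ∀ k : Fin (n - m),
          blkFun hmn f x (embHigh hmn k) = f (hiPart hmn x) k := by
        intro k
        exact congrFun (congrArg WithLp.ofLp (hiPart_blk hmn f x)) k
      rw [Finset.sum_congr rfl fun k _ => by rw [hB1 k]]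
      have h2 : ∑ k : Fin (n - m), ‖f (hiPart hmn x) k‖ ^ 2
          = ‖f (hiPart hmn x)‖ ^ 2 := (PiLp.norm_sq_eq_of_L2 _ _).symm
      rw [h2, f.norm_map, PiLp.norm_sq_eq_of_L2]
      rfl
    rw [A, B]
  exact (sq_eq_sq₀ (norm_nonneg _) (norm_nonneg _)).mp hsq

/-- Block-diagonal extension as a linear isometric equivalence. -/
noncomputable def blkEquiv (hmn : m ≤ n) (f : (Vq (n - m)) ≃ₗᵢ[ℍ[ℝ]] (Vq (n - m))) :
    (Vq n) ≃ₗᵢ[ℍ[ℝ]] (Vq n) where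
  toFun := blkFun hmn f
  invFun := blkFun hmn f.symm
  map_add' x y := by
    ext1 i
    rw [PiLp.add_apply]
    by_cases h : (i : ℕ) < m
    · rw [blk_low hmn f _ h, blk_low hmn f _ h, blk_low hmn f _ h, PiLp.add_apply]
    · rw [blk_high hmn f _ h, blk_high hmn f _ h, blk_high hmn f _ h,
        hiPart_add, map_add, PiLp.add_apply]
  map_smul' c x := by
    ext1 i
    show blkFun hmn f (c • x) i = (c • blkFun hmn f x) i
    rw [PiLp.smul_apply]
    by_cases h : (i : ℕ) < m
    · rw [blk_low hmn f _ h, blk_low hmn f _ h, PiLp.smul_apply]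
    · rw [blk_high hmn f _ h, blk_high hmn f _ h, hiPart_smul, map_smul,
        PiLp.smul_apply]
  left_inv x := by
    show blkFun hmn f.symm (blkFun hmn f x) = x
    ext1 i
    by_cases h : (i : ℕ) < m
    · rw [blk_low hmn f.symm _ h, blk_low hmn f _ h]
    · rw [blk_high hmn f.symm _ h, hiPart_blk hmn f x, f.symm_apply_apply]
      show x (embHigh hmn ⟨(i : ℕ) - m, by have := i.isLt; omega⟩) = x i
      exact congrArg x (Fin.ext (show m + ((i : ℕ) - m) = (i : ℕ) by omega))
  right_inv x := by
    show blkFun hmn f (blkFun hmn f.symm x) = x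
    ext1 i
    by_cases h : (i : ℕ) < m
    · rw [blk_low hmn f _ h, blk_low hmn f.symm _ h]
    · rw [blk_high hmn f _ h, hiPart_blk hmn f.symm x, f.apply_symm_apply]
      show x (embHigh hmn ⟨(i : ℕ) - m, by have := i.isLt; omega⟩) = x i
      exact congrArg x (Fin.ext (show m + ((i : ℕ) - m) = (i : ℕ) by omega))
  norm_map' x := norm_blkFun hmn f x

lemma blk_comp (ι : (Vq m) →ₗᵢ[ℍ[ℝ]] (Vq n))
    (hι : ∀ (x : Vq m) (i : Fin n),
      ι x i = if h : (i : ℕ) < m then x ⟨(i : ℕ), h⟩ else 0)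
    (hmn : m ≤ n) (f : (Vq (n - m)) ≃ₗᵢ[ℍ[ℝ]] (Vq (n - m))) :
    ⇑(blkEquiv hmn f) ∘ ⇑ι = ⇑ι := by
  funext x
  show blkFun hmn f (ι x) = ι x
  ext1 i
  by_cases h : (i : ℕ) < m
  · rw [blk_low hmn f _ h]
  · rw [blk_high hmn f _ h]
    have h0 : hiPart hmn (ι x) = 0 := by
      ext1 k
      exact iota_high ι hι hmn x k
    rw [h0, map_zero, hι, dif_neg h]
    rfl

end Blk

end Aux

/-- For `m ≤ n` and `ι` the standard inclusion `ℍ^m → ℍ^n`, the stabilizer of `ι` in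
the group `G(n)` of linear isometric equivalences of `PiLp 2 (fun _ : Fin n => ℍ[ℝ])` (acting
by postcomposition) is isomorphic, as a group, to the group `G(n - m)` of linear
isometric equivalences of `PiLp 2 (fun _ : Fin (n - m) => ℍ[ℝ])`. -/
theorem stabilizer_of_standard_inclusion_iso (m n : ℕ) (hmn : m ≤ n)
    (ι : PiLp 2 (fun _ : Fin m => ℍ[ℝ]) →ₗᵢ[ℍ[ℝ]] PiLp 2 (fun _ : Fin n => ℍ[ℝ]))
    (hι : ∀ (x : PiLp 2 (fun _ : Fin m => ℍ[ℝ])) (i : Fin n),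
      ι x i = if h : (i : ℕ) < m then x ⟨(i : ℕ), h⟩ else 0) :
    Nonempty ((stabilizerOfInclusion ι) ≃*
      (PiLp 2 (fun _ : Fin (n - m) => ℍ[ℝ]) ≃ₗᵢ[ℍ[ℝ]] PiLp 2 (fun _ : Fin (n - m) => ℍ[ℝ]))) := by
  refine ⟨{
    toFun := fun e => resEquiv ι hι hmn e.1 e.2
    invFun := fun f => ⟨blkEquiv hmn f, blk_comp ι hι hmn f⟩
    left_inv := ?_
    right_inv := ?_
    map_mul' := ?_ }⟩
  · intro e
    apply Subtype.ext
    apply LinearIsometryEquiv.ext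
    intro x
    show blkFun hmn (resEquiv ι hι hmn e.1 e.2) x = e.1 x
    have hlo : e.1 (ι (loPart hmn x)) = ι (loPart hmn x) := congrFun e.2 _
    have hx : e.1 x = ι (loPart hmn x) + Jfun hmn (resFun hmn e.1 (hiPart hmn x)) := by
      calc e.1 x = e.1 (ι (loPart hmn x) + Jfun hmn (hiPart hmn x)) := by
            rw [← decomp ι hι hmn x]
        _ = e.1 (ι (loPart hmn x)) + e.1 (Jfun hmn (hiPart hmn x)) := map_add _ _ _
        _ = ι (loPart hmn x) + Jfun hmn (resFun hmn e.1 (hiPart hmn x)) := by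
            rw [hlo, eJ ι hι hmn e.1 e.2 (hiPart hmn x)]
            rfl
    rw [hx]
    ext1 i
    by_cases h : (i : ℕ) < m
    · rw [blk_low hmn _ _ h, PiLp.add_apply, Jfun_low hmn _ h, add_zero, hι, dif_pos h]
      rfl
    · rw [blk_high hmn _ _ h, PiLp.add_apply, Jfun_high hmn _ h, hι, dif_neg h, zero_add]
      rfl
  · intro f
    apply LinearIsometryEquiv.ext
    intro y
    show hiPart hmn (blkFun hmn f (Jfun hmn y)) = f y
    rw [hiPart_blk hmn f, hiPart_Jfun hmn y]
  · intro a b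
    apply LinearIsometryEquiv.ext
    intro y
    exact resEquiv_mul ι hι hmn a.1 b.1 a.2 b.2 (a * b).2 y
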